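/- Split-exactness (covariant case): Let F be an additive, homotopy invariant, half-exact covariant functor from C*-algebras to abelian groups. Then F is split-exact: for every short exact sequence A0 →ι A1 →π A2 of C*-algebras which splits, i.e., admits a *-homomorphism s : A2 → A1 with π∘s = id_{A2}, the sequence 0 → F(A0) →F(ι) F(A1) →F(π) F(A2) → 0 is exact (F(ι) is injective, F(π) is surjective with range F(ι) = ker F(π)), and F(s) is a splitting of it. -/

import Mathlib

/-!
Formalization preamble: cones, suspensions, mapping cones of (non-unital) C*-algebras,
their concrete models inside algebras of continuous functions, and functors from
C*-algebras to abelian groups.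
-/

set_option maxHeartbeats 1600000
set_option synthInstance.maxHeartbeats 800000

open scoped unitInterval CStarAlgebra

noncomputable section

namespace CStarPaper

variable {A B : Type*} [NonUnitalCStarAlgebra A] [NonUnitalCStarAlgebra B]

/-- The flip of a continuous function on the square `[0,1]²`. -/
def flip2 {A : Type*} [NonUnitalCStarAlgebra A] (f : C(I × I, A)) : C(I × I, A) :=
  f.comp ⟨Prod.swap, continuous_swap⟩

@[simp] lemma flip2_apply (f : C(I × I, A)) (s t : I) : flip2 f (s, t) = f (t, s) := rfl

/-- The cone `CA = {f ∈ C([0,1],A) : f(0) = 0}` of a C*-algebra `A`. -/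
def cone (A : Type*) [NonUnitalCStarAlgebra A] : NonUnitalStarSubalgebra ℂ C(I, A) where
  carrier := {f | f 0 = 0}
  add_mem' := by intro f g hf hg; simp_all [Set.mem_setOf_eq]
  zero_mem' := by simp [Set.mem_setOf_eq]
  mul_mem' := by intro f g hf hg; simp_all [Set.mem_setOf_eq]
  smul_mem' := by intro c f hf; simp_all [Set.mem_setOf_eq]
  star_mem' := by intro f hf; simp_all [Set.mem_setOf_eq, map_star]

instance cone.isClosed (A : Type*) [NonUnitalCStarAlgebra A] :
    IsClosed ((cone A : Set C(I, A))) :=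
  isClosed_eq (continuous_eval_const 0) continuous_const

/-- The suspension `SA = {f ∈ C([0,1],A) : f(0) = f(1) = 0}` of a C*-algebra `A`. -/
def susp (A : Type*) [NonUnitalCStarAlgebra A] : NonUnitalStarSubalgebra ℂ C(I, A) where
  carrier := {f | f 0 = 0 ∧ f 1 = 0}
  add_mem' := by intro f g hf hg; simp_all [Set.mem_setOf_eq]
  zero_mem' := by simp [Set.mem_setOf_eq]
  mul_mem' := by intro f g hf hg; simp_all [Set.mem_setOf_eq]
  smul_mem' := by intro c f hf; simp_all [Set.mem_setOf_eq]
  star_mem' := by intro f hf; simp_all [Set.mem_setOf_eq, map_star]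

instance susp.isClosed (A : Type*) [NonUnitalCStarAlgebra A] :
    IsClosed ((susp A : Set C(I, A))) := by
  have h : (susp A : Set C(I, A)) = {f | f 0 = 0} ∩ {f | f 1 = 0} := rfl
  rw [h]
  exact (isClosed_eq (continuous_eval_const 0) continuous_const).inter
    (isClosed_eq (continuous_eval_const 1) continuous_const)

/-- The mapping cone `C_φ = {(x,y) ∈ A ⊕ CB : φ(x) = y(1)}` of `φ : A → B`. -/
def mapCone (φ : A →⋆ₙₐ[ℂ] B) : NonUnitalStarSubalgebra ℂ (A × C(I, B)) where
  carrier := {p | p.2 0 = 0 ∧ φ p.1 = p.2 1}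
  add_mem' := by intro p q hp hq; simp_all [Set.mem_setOf_eq]
  zero_mem' := by simp [Set.mem_setOf_eq]
  mul_mem' := by intro p q hp hq; simp_all [Set.mem_setOf_eq]
  smul_mem' := by intro c p hp; simp_all [Set.mem_setOf_eq]
  star_mem' := by intro p hp; simp_all [Set.mem_setOf_eq, map_star]

instance mapCone.isClosed (φ : A →⋆ₙₐ[ℂ] B) :
    IsClosed ((mapCone φ : Set (A × C(I, B)))) := by
  have h : (mapCone φ : Set (A × C(I, B)))
      = {p : A × C(I, B) | p.2 0 = 0} ∩ {p : A × C(I, B) | φ p.1 = p.2 1} := rfl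
  rw [h]
  exact (isClosed_eq ((continuous_eval_const 0).comp continuous_snd) continuous_const).inter
    (isClosed_eq ((map_continuous φ).comp continuous_fst)
      ((continuous_eval_const 1).comp continuous_snd))

/-- The canonical inclusion `SA → CA`. -/
def suspIncl (A : Type*) [NonUnitalCStarAlgebra A] : ↥(susp A) →⋆ₙₐ[ℂ] ↥(cone A) where
  toFun f := ⟨(f : C(I, A)), f.2.1⟩
  map_smul' _ _ := rfl
  map_zero' := rfl
  map_add' _ _ := rfl
  map_mul' _ _ := rfl
  map_star' _ := rfl

/-- Evaluation at `1`, as a *-homomorphism `CA → A`. -/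
def coneEval (A : Type*) [NonUnitalCStarAlgebra A] : ↥(cone A) →⋆ₙₐ[ℂ] A where
  toFun f := (f : C(I, A)) 1
  map_smul' _ _ := rfl
  map_zero' := rfl
  map_add' _ _ := rfl
  map_mul' _ _ := rfl
  map_star' _ := rfl

/-- The canonical projection `π_mc : C_φ → A`, `(x,y) ↦ x`. -/
def mapConeProj (φ : A →⋆ₙₐ[ℂ] B) : ↥(mapCone φ) →⋆ₙₐ[ℂ] A where
  toFun p := (p : A × C(I, B)).1
  map_smul' _ _ := rfl
  map_zero' := rfl
  map_add' _ _ := rfl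
  map_mul' _ _ := rfl
  map_star' _ := rfl

/-- The projection `C_φ → CB`, `(x,y) ↦ y`. -/
def mapConeSnd (φ : A →⋆ₙₐ[ℂ] B) : ↥(mapCone φ) →⋆ₙₐ[ℂ] ↥(cone B) where
  toFun p := ⟨(p : A × C(I, B)).2, p.2.1⟩
  map_smul' _ _ := rfl
  map_zero' := rfl
  map_add' _ _ := rfl
  map_mul' _ _ := rfl
  map_star' _ := rfl

/-- The canonical inclusion `ι_mc : SB → C_φ`, `g ↦ (0,g)`. -/
def mapConeIncl (φ : A →⋆ₙₐ[ℂ] B) : ↥(susp B) →⋆ₙₐ[ℂ] ↥(mapCone φ) where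
  toFun g := ⟨(0, (g : C(I, B))), ⟨g.2.1, by simp [g.2.2]⟩⟩
  map_smul' c g := Subtype.ext (by simp [Prod.ext_iff])
  map_zero' := Subtype.ext (by simp [Prod.ext_iff])
  map_add' g h := Subtype.ext (by simp [Prod.ext_iff])
  map_mul' g h := Subtype.ext (by simp [Prod.ext_iff])
  map_star' g := Subtype.ext (by simp [Prod.ext_iff])

/-- The concrete model of the suspension `S(C_φ)` of a mapping cone, inside
`C([0,1],A) × C([0,1]²,B)`. -/
def suspMapConeModel (φ : A →⋆ₙₐ[ℂ] B) :
    NonUnitalStarSubalgebra ℂ (C(I, A) × C(I × I, B)) where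
  carrier := {p | p.1 0 = 0 ∧ p.1 1 = 0 ∧ (∀ t, p.2 (0, t) = 0) ∧ (∀ t, p.2 (1, t) = 0) ∧
    (∀ s, p.2 (s, 0) = 0) ∧ ∀ s, φ (p.1 s) = p.2 (s, 1)}
  add_mem' := by
    rintro p q ⟨h1, h2, h3, h4, h5, h6⟩ ⟨g1, g2, g3, g4, g5, g6⟩
    exact ⟨by simp [h1, g1], by simp [h2, g2], fun t => by simp [h3 t, g3 t],
      fun t => by simp [h4 t, g4 t], fun s => by simp [h5 s, g5 s],
      fun s => by simp [h6 s, g6 s]⟩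
  zero_mem' := ⟨by simp, by simp, fun t => by simp, fun t => by simp, fun s => by simp,
    fun s => by simp⟩
  mul_mem' := by
    rintro p q ⟨h1, h2, h3, h4, h5, h6⟩ ⟨g1, g2, g3, g4, g5, g6⟩
    exact ⟨by simp [h1, g1], by simp [h2, g2], fun t => by simp [h3 t, g3 t],
      fun t => by simp [h4 t, g4 t], fun s => by simp [h5 s, g5 s],
      fun s => by simp [h6 s, g6 s]⟩
  smul_mem' := by
    rintro c p ⟨h1, h2, h3, h4, h5, h6⟩
    exact ⟨by simp [h1], by simp [h2], fun t => by simp [h3 t],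
      fun t => by simp [h4 t], fun s => by simp [h5 s], fun s => by simp [h6 s]⟩
  star_mem' := by
    rintro p ⟨h1, h2, h3, h4, h5, h6⟩
    exact ⟨by simp [h1], by simp [h2], fun t => by simp [h3 t],
      fun t => by simp [h4 t], fun s => by simp [h5 s], fun s => by simp [map_star, h6 s]⟩

/-- The concrete model of the mapping cone `C_{Sφ}` of the suspension of `φ`, inside
`C([0,1],A) × C([0,1]²,B)`. -/
def mapConeSuspModel (φ : A →⋆ₙₐ[ℂ] B) :
    NonUnitalStarSubalgebra ℂ (C(I, A) × C(I × I, B)) where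
  carrier := {p | p.1 0 = 0 ∧ p.1 1 = 0 ∧ (∀ t, p.2 (0, t) = 0) ∧ (∀ s, p.2 (s, 0) = 0) ∧
    (∀ s, p.2 (s, 1) = 0) ∧ ∀ t, φ (p.1 t) = p.2 (1, t)}
  add_mem' := by
    rintro p q ⟨h1, h2, h3, h4, h5, h6⟩ ⟨g1, g2, g3, g4, g5, g6⟩
    exact ⟨by simp [h1, g1], by simp [h2, g2], fun t => by simp [h3 t, g3 t],
      fun s => by simp [h4 s, g4 s], fun s => by simp [h5 s, g5 s],
      fun t => by simp [h6 t, g6 t]⟩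
  zero_mem' := ⟨by simp, by simp, fun t => by simp, fun s => by simp, fun s => by simp,
    fun t => by simp⟩
  mul_mem' := by
    rintro p q ⟨h1, h2, h3, h4, h5, h6⟩ ⟨g1, g2, g3, g4, g5, g6⟩
    exact ⟨by simp [h1, g1], by simp [h2, g2], fun t => by simp [h3 t, g3 t],
      fun s => by simp [h4 s, g4 s], fun s => by simp [h5 s, g5 s],
      fun t => by simp [h6 t, g6 t]⟩
  smul_mem' := by
    rintro c p ⟨h1, h2, h3, h4, h5, h6⟩
    exact ⟨by simp [h1], by simp [h2], fun t => by simp [h3 t],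
      fun s => by simp [h4 s], fun s => by simp [h5 s], fun t => by simp [h6 t]⟩
  star_mem' := by
    rintro p ⟨h1, h2, h3, h4, h5, h6⟩
    exact ⟨by simp [h1], by simp [h2], fun t => by simp [h3 t],
      fun s => by simp [h4 s], fun s => by simp [h5 s], fun t => by simp [map_star, h6 t]⟩

/-- The concrete model of the cone `C(C_φ)` of a mapping cone, inside
`C([0,1],A) × C([0,1]²,B)`. -/
def coneMapConeModel (φ : A →⋆ₙₐ[ℂ] B) :
    NonUnitalStarSubalgebra ℂ (C(I, A) × C(I × I, B)) where
  carrier := {p | p.1 0 = 0 ∧ (∀ t, p.2 (0, t) = 0) ∧ (∀ s, p.2 (s, 0) = 0) ∧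
    ∀ s, φ (p.1 s) = p.2 (s, 1)}
  add_mem' := by
    rintro p q ⟨h1, h3, h5, h6⟩ ⟨g1, g3, g5, g6⟩
    exact ⟨by simp [h1, g1], fun t => by simp [h3 t, g3 t], fun s => by simp [h5 s, g5 s],
      fun s => by simp [h6 s, g6 s]⟩
  zero_mem' := ⟨by simp, fun t => by simp, fun s => by simp, fun s => by simp⟩
  mul_mem' := by
    rintro p q ⟨h1, h3, h5, h6⟩ ⟨g1, g3, g5, g6⟩
    exact ⟨by simp [h1, g1], fun t => by simp [h3 t, g3 t], fun s => by simp [h5 s, g5 s],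
      fun s => by simp [h6 s, g6 s]⟩
  smul_mem' := by
    rintro c p ⟨h1, h3, h5, h6⟩
    exact ⟨by simp [h1], fun t => by simp [h3 t], fun s => by simp [h5 s],
      fun s => by simp [h6 s]⟩
  star_mem' := by
    rintro p ⟨h1, h3, h5, h6⟩
    exact ⟨by simp [h1], fun t => by simp [h3 t], fun s => by simp [h5 s],
      fun s => by simp [map_star, h6 s]⟩

/-- The concrete model of the mapping cone `C_{Cφ}` of the cone of `φ`, inside
`C([0,1],A) × C([0,1]²,B)`. -/
def mapConeConeModel (φ : A →⋆ₙₐ[ℂ] B) :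
    NonUnitalStarSubalgebra ℂ (C(I, A) × C(I × I, B)) where
  carrier := {p | p.1 0 = 0 ∧ (∀ t, p.2 (0, t) = 0) ∧ (∀ s, p.2 (s, 0) = 0) ∧
    ∀ t, φ (p.1 t) = p.2 (1, t)}
  add_mem' := by
    rintro p q ⟨h1, h3, h5, h6⟩ ⟨g1, g3, g5, g6⟩
    exact ⟨by simp [h1, g1], fun t => by simp [h3 t, g3 t], fun s => by simp [h5 s, g5 s],
      fun t => by simp [h6 t, g6 t]⟩
  zero_mem' := ⟨by simp, fun t => by simp, fun s => by simp, fun t => by simp⟩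
  mul_mem' := by
    rintro p q ⟨h1, h3, h5, h6⟩ ⟨g1, g3, g5, g6⟩
    exact ⟨by simp [h1, g1], fun t => by simp [h3 t, g3 t], fun s => by simp [h5 s, g5 s],
      fun t => by simp [h6 t, g6 t]⟩
  smul_mem' := by
    rintro c p ⟨h1, h3, h5, h6⟩
    exact ⟨by simp [h1], fun t => by simp [h3 t], fun s => by simp [h5 s],
      fun t => by simp [h6 t]⟩
  star_mem' := by
    rintro p ⟨h1, h3, h5, h6⟩
    exact ⟨by simp [h1], fun t => by simp [h3 t], fun s => by simp [h5 s],
      fun t => by simp [map_star, h6 t]⟩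

variable {X Y₁ Y₂ Z : Type*} [NonUnitalCStarAlgebra X] [NonUnitalCStarAlgebra Y₁]
  [NonUnitalCStarAlgebra Y₂] [NonUnitalCStarAlgebra Z]

/-- The canonical concrete realization of the double mapping cone associated to a commuting
square `ψ₁ ∘ φ₁ = ψ₂ ∘ φ₂`, inside `X × C([0,1],Y₁) × C([0,1],Y₂) × C([0,1]²,Z)`. -/
def dblCone (φ₁ : X →⋆ₙₐ[ℂ] Y₁) (φ₂ : X →⋆ₙₐ[ℂ] Y₂) (ψ₁ : Y₁ →⋆ₙₐ[ℂ] Z) (ψ₂ : Y₂ →⋆ₙₐ[ℂ] Z) :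
    NonUnitalStarSubalgebra ℂ (X × C(I, Y₁) × C(I, Y₂) × C(I × I, Z)) where
  carrier := {p | p.2.1 0 = 0 ∧ p.2.2.1 0 = 0 ∧ (∀ t, p.2.2.2 (0, t) = 0) ∧
    (∀ s, p.2.2.2 (s, 0) = 0) ∧ φ₁ p.1 = p.2.1 1 ∧ φ₂ p.1 = p.2.2.1 1 ∧
    (∀ t, ψ₁ (p.2.1 t) = p.2.2.2 (1, t)) ∧ ∀ s, ψ₂ (p.2.2.1 s) = p.2.2.2 (s, 1)}
  add_mem' := by
    rintro p q ⟨h1, h2, h3, h4, h5, h6, h7, h8⟩ ⟨g1, g2, g3, g4, g5, g6, g7, g8⟩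
    exact ⟨by simp [h1, g1], by simp [h2, g2], fun t => by simp [h3 t, g3 t],
      fun s => by simp [h4 s, g4 s], by simp [h5, g5], by simp [h6, g6],
      fun t => by simp [h7 t, g7 t], fun s => by simp [h8 s, g8 s]⟩
  zero_mem' := ⟨by simp, by simp, fun t => by simp, fun s => by simp, by simp, by simp,
    fun t => by simp, fun s => by simp⟩
  mul_mem' := by
    rintro p q ⟨h1, h2, h3, h4, h5, h6, h7, h8⟩ ⟨g1, g2, g3, g4, g5, g6, g7, g8⟩
    exact ⟨by simp [h1, g1], by simp [h2, g2], fun t => by simp [h3 t, g3 t],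
      fun s => by simp [h4 s, g4 s], by simp [h5, g5], by simp [h6, g6],
      fun t => by simp [h7 t, g7 t], fun s => by simp [h8 s, g8 s]⟩
  smul_mem' := by
    rintro c p ⟨h1, h2, h3, h4, h5, h6, h7, h8⟩
    exact ⟨by simp [h1], by simp [h2], fun t => by simp [h3 t], fun s => by simp [h4 s],
      by simp [h5], by simp [h6], fun t => by simp [h7 t], fun s => by simp [h8 s]⟩
  star_mem' := by
    rintro p ⟨h1, h2, h3, h4, h5, h6, h7, h8⟩
    exact ⟨by simp [h1], by simp [h2], fun t => by simp [h3 t], fun s => by simp [h4 s],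
      by simp [map_star, h5], by simp [map_star, h6], fun t => by simp [map_star, h7 t],
      fun s => by simp [map_star, h8 s]⟩

/-- The pullback of two *-homomorphisms with common codomain, as a *-subalgebra of the
direct sum. -/
def pullbackAlg {B₂ C₁ C₂ : Type*} [NonUnitalCStarAlgebra B₂] [NonUnitalCStarAlgebra C₁]
    [NonUnitalCStarAlgebra C₂] (v : B₂ →⋆ₙₐ[ℂ] C₂) (w : C₁ →⋆ₙₐ[ℂ] C₂) :
    NonUnitalStarSubalgebra ℂ (B₂ × C₁) where
  carrier := {p | v p.1 = w p.2}
  add_mem' := by intro p q hp hq; simp_all [Set.mem_setOf_eq]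
  zero_mem' := by simp [Set.mem_setOf_eq]
  mul_mem' := by intro p q hp hq; simp_all [Set.mem_setOf_eq]
  smul_mem' := by intro c p hp; simp_all [Set.mem_setOf_eq]
  star_mem' := by intro p hp; simp_all [Set.mem_setOf_eq, map_star]

/-- `ι, π` form a short exact sequence. -/
def IsShortExact {A₀ A₁ A₂ : Type*}
    [NonUnitalNonAssocSemiring A₀] [NonUnitalNonAssocSemiring A₁] [NonUnitalNonAssocSemiring A₂]
    [DistribMulAction ℂ A₀] [DistribMulAction ℂ A₁] [DistribMulAction ℂ A₂]
    [Star A₀] [Star A₁] [Star A₂]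
    (ι : A₀ →⋆ₙₐ[ℂ] A₁) (π : A₁ →⋆ₙₐ[ℂ] A₂) : Prop :=
  Function.Injective ι ∧ Function.Surjective π ∧ Set.range ι = {b | π b = 0}

/-- A covariant functor from (non-unital) C*-algebras to abelian groups. -/
structure AbFunctor where
  obj : (A : Type) → [NonUnitalCStarAlgebra A] → Type
  grp : (A : Type) → [NonUnitalCStarAlgebra A] → AddCommGroup (obj A)
  map : {A B : Type} → [NonUnitalCStarAlgebra A] → [NonUnitalCStarAlgebra B] →
    (A →⋆ₙₐ[ℂ] B) → obj A → obj B
  map_add : ∀ {A B : Type} [NonUnitalCStarAlgebra A] [NonUnitalCStarAlgebra B]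
    (φ : A →⋆ₙₐ[ℂ] B) (x y : obj A),
      letI := grp A
      letI := grp B
      map φ (x + y) = map φ x + map φ y
  map_id : ∀ {A : Type} [NonUnitalCStarAlgebra A] (φ : A →⋆ₙₐ[ℂ] A),
    (∀ a, φ a = a) → ∀ x, map φ x = x
  map_comp : ∀ {A B C : Type} [NonUnitalCStarAlgebra A] [NonUnitalCStarAlgebra B]
    [NonUnitalCStarAlgebra C] (φ : A →⋆ₙₐ[ℂ] B) (ψ : B →⋆ₙₐ[ℂ] C) (x : obj A),
      map (ψ.comp φ) x = map ψ (map φ x)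

attribute [instance] AbFunctor.grp

/-- The first coordinate projection as a *-homomorphism. -/
def fstHom (A B : Type*) [NonUnitalCStarAlgebra A] [NonUnitalCStarAlgebra B] :
    (A × B) →⋆ₙₐ[ℂ] A where
  toFun := Prod.fst
  map_smul' _ _ := rfl
  map_zero' := rfl
  map_add' _ _ := rfl
  map_mul' _ _ := rfl
  map_star' _ := rfl

/-- The second coordinate projection as a *-homomorphism. -/
def sndHom (A B : Type*) [NonUnitalCStarAlgebra A] [NonUnitalCStarAlgebra B] :
    (A × B) →⋆ₙₐ[ℂ] B where
  toFun := Prod.snd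
  map_smul' _ _ := rfl
  map_zero' := rfl
  map_add' _ _ := rfl
  map_mul' _ _ := rfl
  map_star' _ := rfl

/-- Additivity: `F(A ⊕ B) ≅ F(A) × F(B)` via the coordinate projections. -/
def AbFunctor.Additive (F : AbFunctor) : Prop :=
  ∀ (A B : Type) [NonUnitalCStarAlgebra A] [NonUnitalCStarAlgebra B],
    Function.Bijective fun x : F.obj (A × B) => (F.map (fstHom A B) x, F.map (sndHom A B) x)

/-- Homotopy invariance. -/
def AbFunctor.HomotopyInvariant (F : AbFunctor) : Prop :=
  ∀ (A B : Type) [NonUnitalCStarAlgebra A] [NonUnitalCStarAlgebra B] (φ ψ : A →⋆ₙₐ[ℂ] B),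
    (∃ Φ : A →⋆ₙₐ[ℂ] C(I, B), (∀ a, Φ a 0 = φ a) ∧ (∀ a, Φ a 1 = ψ a)) →
    ∀ x, F.map φ x = F.map ψ x

/-- Half-exactness. -/
def AbFunctor.HalfExact (F : AbFunctor) : Prop :=
  ∀ (A₀ A₁ A₂ : Type) [NonUnitalCStarAlgebra A₀] [NonUnitalCStarAlgebra A₁]
    [NonUnitalCStarAlgebra A₂] (ι : A₀ →⋆ₙₐ[ℂ] A₁) (π : A₁ →⋆ₙₐ[ℂ] A₂),
    IsShortExact ι π → ∀ y : F.obj A₁, (∃ x, F.map ι x = y) ↔ F.map π y = 0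



/-! ### Auxiliary material for statement 5 -/

section Aux

lemma AbFunctor.map_zero'' (F : AbFunctor) {A B : Type} [NonUnitalCStarAlgebra A]
    [NonUnitalCStarAlgebra B] (φ : A →⋆ₙₐ[ℂ] B) : F.map φ 0 = 0 := by
  have h := F.map_add φ 0 0
  rw [add_zero] at h
  exact (left_eq_add.mp h)

lemma AbFunctor.map_sub'' (F : AbFunctor) {A B : Type} [NonUnitalCStarAlgebra A]
    [NonUnitalCStarAlgebra B] (φ : A →⋆ₙₐ[ℂ] B) (x y : F.obj A) :
    F.map φ (x - y) = F.map φ x - F.map φ y := by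
  have h := F.map_add φ (x - y) y
  rw [sub_add_cancel] at h
  rw [h]; abel

/-- The zero C*-algebra, realized as the closed subalgebra `{0} ⊆ ℂ`. -/
def zeroAlg : NonUnitalStarSubalgebra ℂ ℂ where
  carrier := {0}
  add_mem' := by intro f g hf hg; simp_all
  zero_mem' := by simp
  mul_mem' := by intro f g hf hg; simp_all
  smul_mem' := by intro c f hf; simp_all
  star_mem' := by intro f hf; simp_all

instance zeroAlg.isClosed : IsClosed ((zeroAlg : Set ℂ)) := isClosed_singleton

instance : Subsingleton ↥zeroAlg :=
  ⟨fun a b => by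
    apply Subtype.ext
    have ha : (a : ℂ) ∈ ({0} : Set ℂ) := a.2
    have hb : (b : ℂ) ∈ ({0} : Set ℂ) := b.2
    rw [Set.mem_singleton_iff] at ha hb
    rw [ha, hb]⟩

lemma AbFunctor.zeroAlg_trivial (F : AbFunctor) (hAdd : F.Additive)
    (u v : F.obj ↥zeroAlg) : u = v := by
  obtain ⟨x, hx⟩ := (hAdd ↥zeroAlg ↥zeroAlg).2 (u, v)
  have hfs : fstHom ↥zeroAlg ↥zeroAlg = sndHom ↥zeroAlg ↥zeroAlg := by
    ext p; exact congrArg Subtype.val (Subsingleton.elim _ _)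
  have h1 : F.map (fstHom ↥zeroAlg ↥zeroAlg) x = u := congrArg Prod.fst hx
  have h2 : F.map (sndHom ↥zeroAlg ↥zeroAlg) x = v := congrArg Prod.snd hx
  rw [← h1, ← h2, hfs]

lemma AbFunctor.map_zeroHom (F : AbFunctor) (hAdd : F.Additive) {A B : Type}
    [NonUnitalCStarAlgebra A] [NonUnitalCStarAlgebra B] (x : F.obj A) :
    F.map (0 : A →⋆ₙₐ[ℂ] B) x = 0 := by
  have hfact : (0 : A →⋆ₙₐ[ℂ] B) = (0 : ↥zeroAlg →⋆ₙₐ[ℂ] B).comp (0 : A →⋆ₙₐ[ℂ] ↥zeroAlg) :=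
    NonUnitalStarAlgHom.ext fun a => by simp
  rw [hfact, F.map_comp]
  rw [F.zeroAlg_trivial hAdd (F.map (0 : A →⋆ₙₐ[ℂ] ↥zeroAlg) x) 0]
  exact F.map_zero'' _

/-- Multiplication `[0,1]² → [0,1]`, as a continuous map. -/
def mulCM : C(I × I, I) :=
  ⟨fun p => p.1 * p.2, by
    apply Continuous.subtype_mk
    exact (continuous_subtype_val.comp continuous_fst).mul
      (continuous_subtype_val.comp continuous_snd)⟩

/-- The canonical contraction of the cone, as a homotopy of *-homomorphisms. -/
def coneContraction (A : Type*) [NonUnitalCStarAlgebra A] :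
    ↥(cone A) →⋆ₙₐ[ℂ] C(I, ↥(cone A)) where
  toFun f :=
    ⟨fun u => ⟨(ContinuousMap.curry (((f : C(I, A))).comp mulCM)) u, by
        show (f : C(I, A)) (mulCM (u, 0)) = 0
        have : mulCM (u, 0) = 0 := Subtype.ext (mul_zero _)
        rw [this]; exact f.2⟩,
      by
        apply Continuous.subtype_mk
        exact (ContinuousMap.curry (((f : C(I, A))).comp mulCM)).continuous⟩
  map_smul' c f := by ext u t; rfl
  map_zero' := by ext u t; rfl
  map_add' f g := by ext u t; rfl
  map_mul' f g := by ext u t; rfl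
  map_star' f := by ext u t; rfl

lemma AbFunctor.cone_trivial (F : AbFunctor) (hAdd : F.Additive)
    (hHtpy : F.HomotopyInvariant) (A : Type) [NonUnitalCStarAlgebra A]
    (x : F.obj ↥(cone A)) : x = 0 := by
  have h := hHtpy ↥(cone A) ↥(cone A) (0 : ↥(cone A) →⋆ₙₐ[ℂ] ↥(cone A))
      (NonUnitalStarAlgHom.id ℂ ↥(cone A))
      ⟨coneContraction A, ?_, ?_⟩ x
  · rw [F.map_id (NonUnitalStarAlgHom.id ℂ ↥(cone A)) (fun a => rfl) x] at h
    rw [← h]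
    exact F.map_zeroHom hAdd x
  · intro f
    apply Subtype.ext; apply ContinuousMap.ext; intro t
    show (f : C(I, A)) (mulCM (0, t)) = 0
    have : mulCM (0, t) = 0 := Subtype.ext (zero_mul _)
    rw [this]; exact f.2
  · intro f
    apply Subtype.ext; apply ContinuousMap.ext; intro t
    show (f : C(I, A)) (mulCM (1, t)) = (f : C(I, A)) t
    have : mulCM (1, t) = t := Subtype.ext (one_mul _)
    rw [this]

end Aux

section Cyl

variable {A B : Type*} [NonUnitalCStarAlgebra A] [NonUnitalCStarAlgebra B]

/-- The mapping cylinder `Z_φ = {(x,y) ∈ A ⊕ C([0,1],B) : φ(x) = y(1)}`. -/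
def cyl (φ : A →⋆ₙₐ[ℂ] B) : NonUnitalStarSubalgebra ℂ (A × C(I, B)) where
  carrier := {p | φ p.1 = p.2 1}
  add_mem' := by intro p q hp hq; simp_all [Set.mem_setOf_eq]
  zero_mem' := by simp [Set.mem_setOf_eq]
  mul_mem' := by intro p q hp hq; simp_all [Set.mem_setOf_eq]
  smul_mem' := by intro c p hp; simp_all [Set.mem_setOf_eq]
  star_mem' := by intro p hp; simp_all [Set.mem_setOf_eq, map_star]

instance cyl.isClosed (φ : A →⋆ₙₐ[ℂ] B) : IsClosed ((cyl φ : Set (A × C(I, B)))) :=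
  isClosed_eq ((map_continuous φ).comp continuous_fst)
    ((continuous_eval_const 1).comp continuous_snd)

/-- The inclusion `C_φ → Z_φ`. -/
def cylIncl (φ : A →⋆ₙₐ[ℂ] B) : ↥(mapCone φ) →⋆ₙₐ[ℂ] ↥(cyl φ) where
  toFun p := ⟨(p : A × C(I, B)), p.2.2⟩
  map_smul' _ _ := rfl
  map_zero' := rfl
  map_add' _ _ := rfl
  map_mul' _ _ := rfl
  map_star' _ := rfl

/-- Evaluation at `0`, as a *-homomorphism `Z_φ → B`. -/
def cylEval (φ : A →⋆ₙₐ[ℂ] B) : ↥(cyl φ) →⋆ₙₐ[ℂ] B where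
  toFun p := (p : A × C(I, B)).2 0
  map_smul' _ _ := rfl
  map_zero' := rfl
  map_add' _ _ := rfl
  map_mul' _ _ := rfl
  map_star' _ := rfl

/-- The projection `Z_φ → A`. -/
def cylProj (φ : A →⋆ₙₐ[ℂ] B) : ↥(cyl φ) →⋆ₙₐ[ℂ] A where
  toFun p := (p : A × C(I, B)).1
  map_smul' _ _ := rfl
  map_zero' := rfl
  map_add' _ _ := rfl
  map_mul' _ _ := rfl
  map_star' _ := rfl

/-- The canonical section `A → Z_φ`, `a ↦ (a, const φ(a))`. -/
def cylSec (φ : A →⋆ₙₐ[ℂ] B) : A →⋆ₙₐ[ℂ] ↥(cyl φ) where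
  toFun a := ⟨(a, ContinuousMap.const I (φ a)), rfl⟩
  map_smul' c a := Subtype.ext (by simp [Prod.ext_iff]; ext t; simp)
  map_zero' := Subtype.ext (by simp [Prod.ext_iff])
  map_add' a b := Subtype.ext (by simp [Prod.ext_iff]; ext t; simp)
  map_mul' a b := Subtype.ext (by simp [Prod.ext_iff]; ext t; simp)
  map_star' a := Subtype.ext (by simp [Prod.ext_iff, map_star]; ext t; simp)

lemma cyl_shortExact (φ : A →⋆ₙₐ[ℂ] B) : IsShortExact (cylIncl φ) (cylEval φ) := by
  refine ⟨?_, ?_, ?_⟩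
  · intro p q h
    have h2 := congrArg Subtype.val h
    exact Subtype.ext h2
  · intro b
    refine ⟨⟨(0, ⟨fun t => ((1 - (t : ℝ) : ℝ) : ℂ) • b, ?_⟩), ?_⟩, ?_⟩
    · fun_prop
    · show φ 0 = _
      simp
    · show ((1 - ((0 : I) : ℝ) : ℝ) : ℂ) • b = b
      norm_num
  · ext p
    constructor
    · rintro ⟨w, rfl⟩
      exact w.2.1
    · intro hp
      exact ⟨⟨(p : A × C(I, B)), ⟨hp, p.2⟩⟩, rfl⟩

end Cyl

section SplitSES

variable {A B C : Type*} [NonUnitalCStarAlgebra A] [NonUnitalCStarAlgebra B]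
  [NonUnitalCStarAlgebra C]

/-- The inclusion `CA → C_φ`, `k ↦ (k(1), φ∘k)`. -/
def coneToMapCone (φ : A →⋆ₙₐ[ℂ] B) : ↥(cone A) →⋆ₙₐ[ℂ] ↥(mapCone φ) where
  toFun k := ⟨(((k : C(I, A)) 1),
      (⟨φ, map_continuous φ⟩ : C(A, B)).comp (k : C(I, A))),
      ⟨by show φ ((k : C(I, A)) 0) = 0; rw [k.2]; exact map_zero φ, rfl⟩⟩
  map_smul' c k := Subtype.ext (by
    refine Prod.ext ?_ (ContinuousMap.ext fun t => ?_) <;> simp)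
  map_zero' := Subtype.ext (by
    refine Prod.ext ?_ (ContinuousMap.ext fun t => ?_) <;> simp)
  map_add' k l := Subtype.ext (by
    refine Prod.ext ?_ (ContinuousMap.ext fun t => ?_) <;> simp)
  map_mul' k l := Subtype.ext (by
    refine Prod.ext ?_ (ContinuousMap.ext fun t => ?_) <;> simp)
  map_star' k := Subtype.ext (by
    refine Prod.ext ?_ (ContinuousMap.ext fun t => ?_) <;> simp [map_star])

/-- The projection `C_ι → SC` induced by `π : B → C` with `π ∘ ι = 0`. -/
def mapConeToSusp (φ : A →⋆ₙₐ[ℂ] B) (π : B →⋆ₙₐ[ℂ] C) (hπφ : ∀ a, π (φ a) = 0) :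
    ↥(mapCone φ) →⋆ₙₐ[ℂ] ↥(susp C) where
  toFun p := ⟨(⟨π, map_continuous π⟩ : C(B, C)).comp (p : A × C(I, B)).2,
      ⟨by show π ((p : A × C(I, B)).2 0) = 0; rw [p.2.1]; exact map_zero π,
       by show π ((p : A × C(I, B)).2 1) = 0; rw [← p.2.2]; exact hπφ _⟩⟩
  map_smul' c p := Subtype.ext (ContinuousMap.ext fun t => by simp)
  map_zero' := Subtype.ext (ContinuousMap.ext fun t => by simp)
  map_add' p q := Subtype.ext (ContinuousMap.ext fun t => by simp)
  map_mul' p q := Subtype.ext (ContinuousMap.ext fun t => by simp)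
  map_star' p := Subtype.ext (ContinuousMap.ext fun t => by simp [map_star])

/-- The section `SC → C_φ` induced by a splitting `s : C → B` of `π`. -/
def suspToMapCone (φ : A →⋆ₙₐ[ℂ] B) (π : B →⋆ₙₐ[ℂ] C) (s : C →⋆ₙₐ[ℂ] B)
    (hs : ∀ x, π (s x) = x) :
    ↥(susp C) →⋆ₙₐ[ℂ] ↥(mapCone φ) where
  toFun h := ⟨(0, (⟨s, map_continuous s⟩ : C(C, B)).comp (h : C(I, C))),
      ⟨by show s ((h : C(I, C)) 0) = 0; rw [h.2.1]; exact map_zero s,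
       by show φ 0 = s ((h : C(I, C)) 1); rw [h.2.2, map_zero, map_zero]⟩⟩
  map_smul' c h := Subtype.ext (by
    refine Prod.ext (by simp) (ContinuousMap.ext fun t => ?_); simp)
  map_zero' := Subtype.ext (by
    refine Prod.ext (by simp) (ContinuousMap.ext fun t => ?_); simp)
  map_add' h l := Subtype.ext (by
    refine Prod.ext (by simp) (ContinuousMap.ext fun t => ?_); simp)
  map_mul' h l := Subtype.ext (by
    refine Prod.ext (by simp) (ContinuousMap.ext fun t => ?_); simp)
  map_star' h := Subtype.ext (by
    refine Prod.ext (by simp) (ContinuousMap.ext fun t => ?_); simp [map_star])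

lemma mapCone_shortExact (φ : A →⋆ₙₐ[ℂ] B) (π : B →⋆ₙₐ[ℂ] C) (s : C →⋆ₙₐ[ℂ] B)
    (hφinj : Function.Injective φ) (hrange : Set.range φ = {b | π b = 0})
    (hs : ∀ x, π (s x) = x) :
    IsShortExact (coneToMapCone φ) (mapConeToSusp φ π
      (fun a => (Set.ext_iff.mp hrange (φ a)).mp ⟨a, rfl⟩)) := by
  have hπφ : ∀ a, π (φ a) = 0 := fun a => (Set.ext_iff.mp hrange (φ a)).mp ⟨a, rfl⟩
  refine ⟨?_, ?_, ?_⟩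
  · intro k l h
    have h2 := congrArg Subtype.val h
    have h3 : ∀ t, φ ((k : C(I, A)) t) = φ ((l : C(I, A)) t) := fun t =>
      congrFun (congrArg (fun q : C(I, B) => (q : I → B)) (congrArg Prod.snd h2)) t
    exact Subtype.ext (ContinuousMap.ext fun t => hφinj (h3 t))
  · intro h
    refine ⟨suspToMapCone φ π s hs h, ?_⟩
    exact Subtype.ext (ContinuousMap.ext fun t => hs _)
  · ext p
    constructor
    · rintro ⟨k, rfl⟩
      exact Subtype.ext (ContinuousMap.ext fun t => hπφ _)
    · intro hp
      -- hp : mapConeToSusp ... p = 0, so π ∘ p.2 = 0 pointwise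
      have hp' : ∀ t, π ((p : A × C(I, B)).2 t) = 0 := fun t =>
        congrFun (congrArg (fun q : C(I, C) => (q : I → C))
          (congrArg Subtype.val hp)) t
      have hmem : ∀ t, (p : A × C(I, B)).2 t ∈ Set.range φ := fun t => by
        exact Set.ext_iff.mp hrange _ |>.mpr (hp' t)
      -- build the lift using that `φ` is an isometric embedding
      have hiso : Isometry φ := NonUnitalStarAlgHom.isometry φ hφinj
      let e : A ≃ₜ Set.range φ := hiso.isEmbedding.toHomeomorph
      let k : C(I, A) := ⟨fun t => e.symm ⟨(p : A × C(I, B)).2 t, hmem t⟩,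
        e.symm.continuous.comp (Continuous.subtype_mk
          ((p : A × C(I, B)).2.continuous) _)⟩
      have hk : ∀ t, φ (k t) = (p : A × C(I, B)).2 t := fun t =>
        congrArg Subtype.val (e.apply_symm_apply ⟨(p : A × C(I, B)).2 t, hmem t⟩)
      have hk0 : k 0 = 0 := hφinj (by rw [hk 0, p.2.1, map_zero])
      refine ⟨⟨k, hk0⟩, ?_⟩
      apply Subtype.ext
      refine Prod.ext ?_ (ContinuousMap.ext fun t => hk t)
      show k 1 = (p : A × C(I, B)).1
      exact hφinj (by rw [hk 1, ← p.2.2])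

end SplitSES

/-- The key step: for a split short exact sequence, `F(ι)` has trivial kernel. -/
lemma split_ker_trivial (F : AbFunctor)
    (hAdd : F.Additive) (hHtpy : F.HomotopyInvariant) (hHX : F.HalfExact)
    (A₀ A₁ A₂ : Type) [NonUnitalCStarAlgebra A₀] [NonUnitalCStarAlgebra A₁]
    [NonUnitalCStarAlgebra A₂]
    (ι : A₀ →⋆ₙₐ[ℂ] A₁) (π : A₁ →⋆ₙₐ[ℂ] A₂) (he : IsShortExact ι π)
    (s : A₂ →⋆ₙₐ[ℂ] A₁) (hs : ∀ x, π (s x) = x)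
    (x : F.obj A₀) (hx : F.map ι x = 0) : x = 0 := by
  obtain ⟨hι, hπ, hrange⟩ := he
  have hπι : ∀ a, π (ι a) = 0 := fun a => (Set.ext_iff.mp hrange (ι a)).mp ⟨a, rfl⟩
  -- Step 1: lift `F(i)x` along the mapping-cylinder extension `C_ι → Z_ι → A₁`
  have hqi : F.map (cylEval ι) (F.map (cylSec ι) x) = 0 := by
    rw [← F.map_comp]
    have : (cylEval ι).comp (cylSec ι) = ι := NonUnitalStarAlgHom.ext fun a => rfl
    rw [this]; exact hx
  obtain ⟨w, hw⟩ := (hHX ↥(mapCone ι) ↥(cyl ι) A₁ (cylIncl ι) (cylEval ι)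
    (cyl_shortExact ι) (F.map (cylSec ι) x)).mpr hqi
  -- Step 2: `x = F(θ)(w)` where `θ : C_ι → A₀` is the mapping-cone projection
  have hx2 : x = F.map (mapConeProj ι) w := by
    have h1 : F.map (cylProj ι) (F.map (cylIncl ι) w)
        = F.map (cylProj ι) (F.map (cylSec ι) x) := by rw [hw]
    rw [← F.map_comp, ← F.map_comp] at h1
    have h2 : (cylProj ι).comp (cylIncl ι) = mapConeProj ι :=
      NonUnitalStarAlgHom.ext fun p => rfl
    rw [h2] at h1
    have h3 : F.map ((cylProj ι).comp (cylSec ι)) x = x :=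
      F.map_id _ (fun a => rfl) x
    rw [h3] at h1
    exact h1.symm
  -- Step 3: decompose `w` along the split extension `CA₀ → C_ι → SA₂`
  set ρ := mapConeToSusp ι π (fun a => (Set.ext_iff.mp hrange (ι a)).mp ⟨a, rfl⟩) with hρ
  set sg := suspToMapCone ι π s hs with hsg
  have hρsg : ∀ y, F.map ρ (F.map sg y) = y := fun y => by
    rw [← F.map_comp]
    exact F.map_id _ (fun h => Subtype.ext (ContinuousMap.ext fun t => hs _)) y
  have hker : F.map ρ (w - F.map sg (F.map ρ w)) = 0 := by
    rw [F.map_sub'', hρsg, sub_self]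
  obtain ⟨u, hu⟩ := (hHX ↥(cone A₀) ↥(mapCone ι) ↥(susp A₂) (coneToMapCone ι) ρ
    (mapCone_shortExact ι π s hι hrange hs) _).mpr hker
  -- Step 4: apply `F(θ)` and use that `F(CA₀) = 0` and `θ ∘ sg = 0`
  have hw2 : w = F.map (coneToMapCone ι) u + F.map sg (F.map ρ w) := by
    rw [hu, sub_add_cancel]
  have hu0 : u = 0 := F.cone_trivial hAdd hHtpy A₀ u
  have hterm1 : F.map (mapConeProj ι) (F.map (coneToMapCone ι) u) = 0 := by
    rw [hu0, F.map_zero'', F.map_zero'']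
  have hterm2 : F.map (mapConeProj ι) (F.map sg (F.map ρ w)) = 0 := by
    rw [← F.map_comp]
    have h4 : (mapConeProj ι).comp sg = 0 := NonUnitalStarAlgHom.ext fun h => rfl
    rw [h4]
    exact F.map_zeroHom hAdd _
  rw [hx2, hw2, F.map_add, hterm1, hterm2, add_zero]

/-- An additive, homotopy invariant, half-exact covariant functor is
split-exact. -/
theorem statement5 (F : AbFunctor)
    (hAdd : F.Additive) (hHtpy : F.HomotopyInvariant) (hHX : F.HalfExact)
    (A₀ A₁ A₂ : Type) [NonUnitalCStarAlgebra A₀] [NonUnitalCStarAlgebra A₁]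
    [NonUnitalCStarAlgebra A₂]
    (ι : A₀ →⋆ₙₐ[ℂ] A₁) (π : A₁ →⋆ₙₐ[ℂ] A₂) (he : IsShortExact ι π)
    (s : A₂ →⋆ₙₐ[ℂ] A₁) (hs : ∀ x, π (s x) = x) :
    Function.Injective (F.map ι) ∧
    Function.Surjective (F.map π) ∧
    Set.range (F.map ι) = {y | F.map π y = 0} ∧
    ∀ z, F.map π (F.map s z) = z := by
  have hπs : ∀ z, F.map π (F.map s z) = z := fun z => by
    rw [← F.map_comp]
    exact F.map_id _ hs z
  refine ⟨?_, fun z => ⟨F.map s z, hπs z⟩, ?_, hπs⟩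
  · intro a b hab
    have h : F.map ι (a - b) = 0 := by
      rw [F.map_sub'', hab, sub_self]
    have := split_ker_trivial F hAdd hHtpy hHX A₀ A₁ A₂ ι π he s hs (a - b) h
    exact sub_eq_zero.mp this
  · ext y
    exact (hHX A₀ A₁ A₂ ι π he y)


end CStarPaper
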